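/- Let x_1, ..., x_k ∈ ℝ^n and α_1, ..., α_k ∈ ℝ with ∑_{i=1}^k α_i = 1. Then ∑_{i,j=1}^k α_i α_j ‖x_i - x_j‖₁ ≤ (1/2) ∑_{s=1}^n D(P_s({x_1,...,x_k})), where P_s is the s-th coordinate projection and D denotes diameter in ℝ. -/

import Mathlib

open MeasureTheory Set
set_option maxHeartbeats 1000000

lemma ind_diff {k : ℕ} (a : Fin k → ℝ) (M : ℝ) (hM : ∀ i, a i ≤ M)
    (i j : Fin k) (h : a i ≤ a j) (t : ℝ) :
    (Ioc (a i) M).indicator (1 : ℝ → ℝ) t - (Ioc (a j) M).indicator 1 t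
      = (Ioc (a i) (a j)).indicator 1 t := by
  simp only [Set.indicator_apply, Set.mem_Ioc, Pi.one_apply]
  rcases lt_or_ge (a i) t with h1 | h1 <;> rcases lt_or_ge (a j) t with h2 | h2 <;>
    rcases le_or_gt t M with h3 | h3 <;> simp_all <;>
    first
      | linarith [hM j]
      | rw [if_neg (by linarith)]

lemma oneD {k : ℕ} (a α : Fin k → ℝ) (hsum : ∑ i, α i = 1) :
    ∑ i, ∑ j, α i * α j * |a i - a j| ≤ (1 / 2) * Metric.diam (Set.range a) := by
  rcases Nat.eq_zero_or_pos k with hk | hk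
  · subst hk; simp at hsum
  have i0 : Fin k := ⟨0, hk⟩
  haveI : Nonempty (Fin k) := ⟨i0⟩
  have hu : (Finset.univ : Finset (Fin k)).Nonempty := Finset.univ_nonempty
  set m := Finset.univ.inf' hu a with hm_def
  set M := Finset.univ.sup' hu a with hM_def
  have hm : ∀ i, m ≤ a i := fun i => Finset.inf'_le _ (Finset.mem_univ i)
  have hM : ∀ i, a i ≤ M := fun i => Finset.le_sup' _ (Finset.mem_univ i)
  have hmM : m ≤ M := (hm i0).trans (hM i0)
  set f : Fin k → ℝ → ℝ := fun i => (Set.Ioc (a i) M).indicator 1 with hf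
  clear_value m M
  haveI : IsFiniteMeasure (volume.restrict (Ioc m M)) :=
    ⟨by rw [Measure.restrict_apply_univ]; exact measure_Ioc_lt_top⟩
  have hc : ∀ i t, f i t ^ 2 = f i t := by
    intro i t
    by_cases ht : t ∈ Ioc (a i) M <;> simp [hf, Set.indicator_apply, ht]
  have hd : ∀ i j, a i ≤ a j → ∀ t, f i t - f j t = (Ioc (a i) (a j)).indicator 1 t := by
    intro i j h t; rw [hf]; exact ind_diff a M hM i j h t
  clear_value f
  clear hf
  -- squared differences as indicators
  have hsq : ∀ i j, ∃ b c : ℝ, b ≤ c ∧ m ≤ b ∧ c ≤ M ∧ c - b = |a i - a j| ∧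
      ∀ t, (f i t - f j t) ^ 2 = (Ioc b c).indicator 1 t := by
    intro i j
    rcases le_total (a i) (a j) with h | h
    · refine ⟨a i, a j, h, hm i, hM j, by rw [abs_sub_comm, abs_of_nonneg (by linarith)], fun t => ?_⟩
      rw [show f i t - f j t = (Ioc (a i) (a j)).indicator 1 t from hd i j h t]
      by_cases ht : t ∈ Ioc (a i) (a j) <;> simp [Set.indicator_apply, ht]
    · refine ⟨a j, a i, h, hm j, hM i, by rw [abs_of_nonneg (by linarith)], fun t => ?_⟩
      rw [show (f i t - f j t) ^ 2 = (f j t - f i t) ^ 2 by ring,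
        show f j t - f i t = (Ioc (a j) (a i)).indicator 1 t from hd j i h t]
      by_cases ht : t ∈ Ioc (a j) (a i) <;> simp [Set.indicator_apply, ht]
  have hintegral : ∀ i j, ∫ t in Ioc m M, (f i t - f j t) ^ 2 = |a i - a j| := by
    intro i j
    obtain ⟨b, c, hbc, hmb, hcM, habs, hpt⟩ := hsq i j
    simp_rw [hpt]
    rw [integral_indicator_one measurableSet_Ioc, measureReal_def,
      Measure.restrict_apply measurableSet_Ioc,
      Set.inter_eq_self_of_subset_left (Set.Ioc_subset_Ioc hmb hcM),
      Real.volume_Ioc, ENNReal.toReal_ofReal (by linarith), habs]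
  have hint : ∀ i j, Integrable (fun t => α i * α j * (f i t - f j t) ^ 2)
      (volume.restrict (Ioc m M)) := by
    intro i j
    obtain ⟨b, c, hbc, hmb, hcM, habs, hpt⟩ := hsq i j
    simp_rw [hpt]
    exact (((integrable_indicator_iff measurableSet_Ioc).mpr
      ((integrable_const (1 : ℝ)).integrableOn)).const_mul _)
  calc ∑ i, ∑ j, α i * α j * |a i - a j|
      = ∑ i, ∑ j, ∫ t in Ioc m M, α i * α j * (f i t - f j t) ^ 2 := by
        refine Finset.sum_congr rfl fun i _ => Finset.sum_congr rfl fun j _ => ?_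
        rw [integral_const_mul, hintegral]
    _ = ∫ t in Ioc m M, ∑ i, ∑ j, α i * α j * (f i t - f j t) ^ 2 := by
        rw [integral_finset_sum _ fun i _ => integrable_finset_sum _ fun j _ => hint i j]
        exact Finset.sum_congr rfl fun i _ => (integral_finset_sum _ fun j _ => hint i j).symm
    _ ≤ ∫ _t in Ioc m M, (1 / 2 : ℝ) := by
        refine setIntegral_mono_on
          (integrable_finset_sum _ fun i _ => integrable_finset_sum _ fun j _ => hint i j)
          (integrable_const _) measurableSet_Ioc fun t _ => ?_
        set S := ∑ i, α i * f i t with hS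
        have hS2 : ∑ j, α j * f j t ^ 2 = S := Finset.sum_congr rfl fun j _ => by rw [hc]
        have inner : ∀ i, ∑ j, α i * α j * (f i t - f j t) ^ 2
            = α i * f i t ^ 2 - 2 * (α i * f i t) * S + α i * S := by
          intro i
          have e : ∀ j, α i * α j * (f i t - f j t) ^ 2
              = (α i * f i t ^ 2) * α j - (2 * (α i * f i t)) * (α j * f j t)
                + α i * (α j * f j t ^ 2) := fun j => by ring
          rw [Finset.sum_congr rfl fun j _ => e j, Finset.sum_add_distrib,
            Finset.sum_sub_distrib, ← Finset.mul_sum, ← Finset.mul_sum, ← Finset.mul_sum,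
            hsum, hS2, ← hS, mul_one]
        rw [Finset.sum_congr rfl fun i _ => inner i, Finset.sum_add_distrib,
          Finset.sum_sub_distrib, ← Finset.sum_mul, ← Finset.sum_mul, hS2,
          ← Finset.mul_sum, ← hS, hsum, one_mul]
        nlinarith [sq_nonneg (2 * S - 1)]
    _ = (1 / 2) * (M - m) := by
        rw [setIntegral_const, measureReal_def, Real.volume_Ioc, smul_eq_mul,
          ENNReal.toReal_ofReal (by linarith)]
        ring
    _ ≤ (1 / 2) * Metric.diam (Set.range a) := by
        have hb : Bornology.IsBounded (Set.range a) := (Set.finite_range a).isBounded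
        obtain ⟨iM, _, hiM⟩ := Finset.exists_mem_eq_sup' hu a
        obtain ⟨im, _, him⟩ := Finset.exists_mem_eq_inf' hu a
        have := Metric.dist_le_diam_of_mem hb (Set.mem_range_self iM) (Set.mem_range_self im)
        rw [Real.dist_eq, abs_of_nonneg (by rw [← hiM, ← him] at *; linarith)] at this
        rw [← hiM, ← him] at this
        linarith

theorem stmt_5 (n k : ℕ) (x : Fin k → PiLp 1 fun _ : Fin n => ℝ) (α : Fin k → ℝ)
    (hsum : ∑ i, α i = 1) :
    ∑ i, ∑ j, α i * α j * ‖x i - x j‖ ≤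
      (1 / 2) * ∑ s : Fin n, Metric.diam (Set.range fun i => x i s) := by
  have hnorm : ∀ y : PiLp 1 fun _ : Fin n => ℝ, ‖y‖ = ∑ s, |y s| := by
    intro y
    rw [PiLp.norm_eq_sum (by norm_num)]
    simp [Real.norm_eq_abs]
  calc ∑ i, ∑ j, α i * α j * ‖x i - x j‖
      = ∑ i, ∑ j, ∑ s : Fin n, α i * α j * |x i s - x j s| := by
        refine Finset.sum_congr rfl fun i _ => Finset.sum_congr rfl fun j _ => ?_
        rw [hnorm, Finset.mul_sum]
        refine Finset.sum_congr rfl fun s _ => ?_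
        congr 1
    _ = ∑ i, ∑ s : Fin n, ∑ j, α i * α j * |x i s - x j s| :=
        Finset.sum_congr rfl fun i _ => Finset.sum_comm
    _ = ∑ s : Fin n, ∑ i, ∑ j, α i * α j * |x i s - x j s| := Finset.sum_comm
    _ ≤ ∑ s : Fin n, (1 / 2) * Metric.diam (Set.range fun i => x i s) := by
        exact Finset.sum_le_sum fun s _ => oneD (fun i => x i s) α hsum
    _ = (1 / 2) * ∑ s : Fin n, Metric.diam (Set.range fun i => x i s) := by
        rw [Finset.mul_sum]
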